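/- arXiv:2508.09863 — 4 statements merged into one kernel-verified Lean document; each statement's English description precedes it below -/
import Mathlib

section
/- Let α > 0 and d, c, β ∈ ℝ. Then ∫_ℝ erf(dξ + c) · exp(−(αξ + β)²) dξ = (√π / α) · erf((αc − dβ)/√(α² + d²)). In particular, for d = 1 one has ∫_ℝ erf(ξ + b) e^{−(αξ+β)²} dξ = (√π/α) erf((αb − β)/√(1 + α²)). -/
open Real MeasureTheory

/-- The error function `erf x = (2/√π) ∫₀ˣ e^{−t²} dt`. -/
noncomputable def erf (x : ℝ) : ℝ :=
  (2 / Real.sqrt π) * ∫ t in (0 : ℝ)..x, Real.exp (-t ^ 2)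

lemma exp_neg_sq_cont : Continuous fun t : ℝ => Real.exp (-t ^ 2) := by continuity

lemma hasDerivAt_erf (x : ℝ) :
    HasDerivAt erf (2 / Real.sqrt π * Real.exp (-x ^ 2)) x := by
  have h := (exp_neg_sq_cont.integral_hasStrictDerivAt 0 x).hasDerivAt
  exact h.const_mul (2 / Real.sqrt π)

lemma erf_continuous : Continuous erf :=
  continuous_iff_continuousAt.2 fun x => (hasDerivAt_erf x).continuousAt

lemma erf_zero : erf 0 = 0 := by simp [erf]

lemma erf_neg (x : ℝ) : erf (-x) = - erf x := by
  unfold erf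
  rw [← mul_neg]
  congr 1
  have : (∫ t in (0:ℝ)..(-x), Real.exp (-t ^ 2)) = ∫ t in (0:ℝ)..(-x), Real.exp (-(-t) ^ 2) := by
    simp
  rw [this, intervalIntegral.integral_comp_neg (fun t => Real.exp (-t ^ 2))]
  rw [show -(-x) = x by ring, neg_zero]
  exact (intervalIntegral.integral_symm 0 x)

lemma erf_abs_le_one (x : ℝ) : |erf x| ≤ 1 := by
  have key : ∀ y : ℝ, 0 ≤ y → erf y ≤ 1 ∧ 0 ≤ erf y := by
    intro y hy
    have hint : (∫ t in (0:ℝ)..y, Real.exp (-t ^ 2)) = ∫ t in Set.Ioc 0 y, Real.exp (-t ^ 2) := by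
      rw [intervalIntegral.integral_of_le hy]
    have hIoi : IntegrableOn (fun t : ℝ => Real.exp (-t ^ 2)) (Set.Ioi 0) := by
      have := integrable_exp_neg_mul_sq (one_pos)
      simpa using this.integrableOn
    have hle : (∫ t in Set.Ioc 0 y, Real.exp (-t ^ 2)) ≤ ∫ t in Set.Ioi 0, Real.exp (-t ^ 2) := by
      apply setIntegral_mono_set hIoi
      · exact Filter.Eventually.of_forall fun t => (Real.exp_pos _).le
      · exact Filter.Eventually.of_forall (Set.Ioc_subset_Ioi_self)
    have hval : (∫ t in Set.Ioi 0, Real.exp (-t ^ 2)) = Real.sqrt π / 2 := by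
      have := integral_gaussian_Ioi 1
      simpa using this
    have hnn : 0 ≤ ∫ t in Set.Ioc 0 y, Real.exp (-t ^ 2) :=
      setIntegral_nonneg measurableSet_Ioc fun t _ => (Real.exp_pos _).le
    have hπ : 0 < Real.sqrt π := Real.sqrt_pos.2 Real.pi_pos
    constructor
    · unfold erf
      rw [hint]
      calc 2 / Real.sqrt π * ∫ t in Set.Ioc 0 y, Real.exp (-t ^ 2)
          ≤ 2 / Real.sqrt π * (Real.sqrt π / 2) := by
            apply mul_le_mul_of_nonneg_left (hval ▸ hle) (by positivity)
        _ = 1 := by field_simp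
    · unfold erf
      rw [hint]
      positivity
  rcases le_total 0 x with hx | hx
  · have := key x hx
    rw [abs_of_nonneg this.2]; exact this.1
  · have := key (-x) (by linarith)
    have h2 : erf x ≤ 0 := by have := this.2; rw [erf_neg] at this; linarith
    rw [abs_of_nonpos h2]
    have := this.1; rw [erf_neg] at this; linarith

lemma gauss_integrable (α β : ℝ) (hα : 0 < α) :
    Integrable (fun ξ : ℝ => Real.exp (-(α * ξ + β) ^ 2)) := by
  have h1 : Integrable (fun x : ℝ => Real.exp (-(x ^ 2))) := by
    simpa using integrable_exp_neg_mul_sq one_pos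
  have h2 : Integrable (fun x : ℝ => Real.exp (-((x + β) ^ 2))) := h1.comp_add_right β
  have h3 := h2.comp_mul_left' (R := α) hα.ne'
  simpa using h3

lemma erf_gauss_main (α d c β : ℝ) (hα : 0 < α) :
    (∫ ξ : ℝ, erf (d * ξ + c) * Real.exp (-(α * ξ + β) ^ 2))
      = (Real.sqrt π / α) * erf ((α * c - d * β) / Real.sqrt (α ^ 2 + d ^ 2)) := by
  have hs : (0:ℝ) < α ^ 2 + d ^ 2 := by positivity
  have hss : Real.sqrt (α ^ 2 + d ^ 2) ≠ 0 := (Real.sqrt_pos.2 hs).ne'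
  have hπ : 0 < Real.sqrt π := Real.sqrt_pos.2 Real.pi_pos
  have hg := gauss_integrable α β hα
  set L : ℝ → ℝ := fun y => ∫ ξ : ℝ, erf (d * ξ + y) * Real.exp (-(α * ξ + β) ^ 2) with hL_def
  set R : ℝ → ℝ := fun y =>
    (Real.sqrt π / α) * erf ((α * y - d * β) / Real.sqrt (α ^ 2 + d ^ 2)) with hR_def
  set D : ℝ → ℝ := fun y =>
    2 / Real.sqrt (α ^ 2 + d ^ 2) * Real.exp (-((α * y - d * β) ^ 2 / (α ^ 2 + d ^ 2))) with hD_def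
  -- derivative of L
  have hLderiv : ∀ x : ℝ, HasDerivAt L (D x) x := by
    intro x
    have cont : ∀ y : ℝ, Continuous fun ξ : ℝ => erf (d * ξ + y) * Real.exp (-(α * ξ + β) ^ 2) := by
      intro y
      exact (erf_continuous.comp (by continuity)).mul (by continuity)
    have hmeas : ∀ᶠ y in nhds x, AEStronglyMeasurable
        (fun ξ : ℝ => erf (d * ξ + y) * Real.exp (-(α * ξ + β) ^ 2)) volume :=
      Filter.Eventually.of_forall fun y => (cont y).aestronglyMeasurable
    have hint : Integrable (fun ξ : ℝ => erf (d * ξ + x) * Real.exp (-(α * ξ + β) ^ 2)) := by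
      apply hg.mono' (cont x).aestronglyMeasurable
      refine Filter.Eventually.of_forall fun ξ => ?_
      simp only [norm_mul, Real.norm_eq_abs, Real.abs_exp]
      calc |erf (d * ξ + x)| * Real.exp (-(α * ξ + β) ^ 2)
          ≤ 1 * Real.exp (-(α * ξ + β) ^ 2) :=
            mul_le_mul_of_nonneg_right (erf_abs_le_one _) (Real.exp_pos _).le
        _ = Real.exp (-(α * ξ + β) ^ 2) := one_mul _
    set F' : ℝ → ℝ → ℝ := fun y ξ =>
      2 / Real.sqrt π * Real.exp (-(d * ξ + y) ^ 2) * Real.exp (-(α * ξ + β) ^ 2) with hF'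
    have hF'meas : AEStronglyMeasurable (F' x) volume := by
      apply Continuous.aestronglyMeasurable
      apply Continuous.mul _ (by continuity)
      exact continuous_const.mul (by continuity)
    have hbound : ∀ᵐ ξ : ℝ, ∀ y ∈ Metric.ball x 1,
        ‖F' y ξ‖ ≤ 2 / Real.sqrt π * Real.exp (-(α * ξ + β) ^ 2) := by
      refine Filter.Eventually.of_forall fun ξ y _ => ?_
      have h1 : Real.exp (-(d * ξ + y) ^ 2) ≤ 1 := by
        rw [Real.exp_le_one_iff]
        exact neg_nonpos_of_nonneg (sq_nonneg _)
      rw [Real.norm_eq_abs, abs_of_nonneg (by positivity)]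
      calc 2 / Real.sqrt π * Real.exp (-(d * ξ + y) ^ 2) * Real.exp (-(α * ξ + β) ^ 2)
          ≤ 2 / Real.sqrt π * 1 * Real.exp (-(α * ξ + β) ^ 2) := by
            apply mul_le_mul_of_nonneg_right _ (Real.exp_pos _).le
            exact mul_le_mul_of_nonneg_left h1 (by positivity)
        _ = 2 / Real.sqrt π * Real.exp (-(α * ξ + β) ^ 2) := by ring
    have hbint : Integrable (fun ξ : ℝ => 2 / Real.sqrt π * Real.exp (-(α * ξ + β) ^ 2)) :=
      hg.const_mul _
    have hdiff : ∀ᵐ ξ : ℝ, ∀ y ∈ Metric.ball x 1,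
        HasDerivAt (fun y => erf (d * ξ + y) * Real.exp (-(α * ξ + β) ^ 2)) (F' y ξ) y := by
      refine Filter.Eventually.of_forall fun ξ y _ => ?_
      have hinner : HasDerivAt (fun y : ℝ => d * ξ + y) 1 y := (hasDerivAt_id y).const_add _
      have h := ((hasDerivAt_erf (d * ξ + y)).comp y hinner).mul_const
        (Real.exp (-(α * ξ + β) ^ 2))
      have h2 : F' y ξ = 2 / Real.sqrt π * Real.exp (-(d * ξ + y) ^ 2) * 1 *
          Real.exp (-(α * ξ + β) ^ 2) := by rw [hF']; ring
      rw [h2]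
      exact h
    have key := hasDerivAt_integral_of_dominated_loc_of_deriv_le (Metric.ball_mem_nhds x one_pos) hmeas hint hF'meas
      hbound hbint hdiff
    have hD2 : (∫ ξ : ℝ, F' x ξ) = D x := by
      have hfac : ∀ ξ : ℝ, F' x ξ =
          (2 / Real.sqrt π * Real.exp (-((α * x - d * β) ^ 2 / (α ^ 2 + d ^ 2)))) *
          Real.exp (-(α ^ 2 + d ^ 2) * (ξ + (d * x + α * β) / (α ^ 2 + d ^ 2)) ^ 2) := by
        intro ξ
        show 2 / Real.sqrt π * Real.exp (-(d * ξ + x) ^ 2) * Real.exp (-(α * ξ + β) ^ 2) = _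
        rw [mul_assoc, mul_assoc, ← Real.exp_add, ← Real.exp_add]
        congr 2
        field_simp
        ring
      simp only [hfac]
      rw [integral_const_mul, integral_add_right_eq_self
        (fun t : ℝ => Real.exp (-(α ^ 2 + d ^ 2) * t ^ 2)), integral_gaussian,
        Real.sqrt_div Real.pi_pos.le, hD_def]
      field_simp
    rw [← hD2]
    exact key.2
  -- derivative of R
  have hRderiv : ∀ x : ℝ, HasDerivAt R (D x) x := by
    intro x
    have h1 : HasDerivAt (fun y : ℝ => (α * y - d * β) / Real.sqrt (α ^ 2 + d ^ 2))
        (α / Real.sqrt (α ^ 2 + d ^ 2)) x := by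
      have := (((hasDerivAt_id x).const_mul α).sub_const (d * β)).div_const
        (Real.sqrt (α ^ 2 + d ^ 2))
      simpa using this
    have h2 := ((hasDerivAt_erf ((α * x - d * β) / Real.sqrt (α ^ 2 + d ^ 2))).comp x h1).const_mul
      (Real.sqrt π / α)
    have h3 : Real.sqrt π / α * (2 / Real.sqrt π *
        Real.exp (-((α * x - d * β) / Real.sqrt (α ^ 2 + d ^ 2)) ^ 2) *
        (α / Real.sqrt (α ^ 2 + d ^ 2))) = D x := by
      rw [div_pow, Real.sq_sqrt hs.le, hD_def]
      field_simp
    rw [hR_def]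
    rw [← h3]
    exact h2
  -- both sides agree at c₀ = d β / α and have equal derivatives
  have hconst : ∀ x y : ℝ, L x - R x = L y - R y := by
    apply is_const_of_deriv_eq_zero
    · intro x
      exact ((hLderiv x).sub (hRderiv x)).differentiableAt
    · intro x
      have := ((hLderiv x).sub (hRderiv x)).deriv
      simp at this; exact this
  have hR0 : R (d * β / α) = 0 := by
    have h0 : α * (d * β / α) - d * β = 0 := by field_simp; ring
    show Real.sqrt π / α * erf ((α * (d * β / α) - d * β) / Real.sqrt (α ^ 2 + d ^ 2)) = 0
    rw [h0, zero_div, erf_zero, mul_zero]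
  have hL0 : L (d * β / α) = 0 := by
    have e : (fun ξ : ℝ => erf (d * ξ + d * β / α) * Real.exp (-(α * ξ + β) ^ 2))
        = fun ξ : ℝ => (fun t : ℝ => erf (d * t) * Real.exp (-(α * t) ^ 2)) (ξ + β / α) := by
      funext ξ
      have e1 : d * (ξ + β / α) = d * ξ + d * β / α := by field_simp
      have e2 : α * (ξ + β / α) = α * ξ + β := by field_simp
      show erf (d * ξ + d * β / α) * Real.exp (-(α * ξ + β) ^ 2)
          = erf (d * (ξ + β / α)) * Real.exp (-(α * (ξ + β / α)) ^ 2)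
      rw [e1, e2]
    show (∫ ξ : ℝ, erf (d * ξ + d * β / α) * Real.exp (-(α * ξ + β) ^ 2)) = 0
    rw [e, integral_add_right_eq_self (fun t : ℝ => erf (d * t) * Real.exp (-(α * t) ^ 2)) (β / α)]
    have hodd : (fun t : ℝ => erf (d * -t) * Real.exp (-(α * -t) ^ 2))
        = fun t : ℝ => -(erf (d * t) * Real.exp (-(α * t) ^ 2)) := by
      funext t
      rw [mul_neg, erf_neg]
      have : (-(α * -t)) ^ 2 = (α * t) ^ 2 := by ring
      rw [show -(α * -t) ^ 2 = -(α * t) ^ 2 by ring]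
      ring
    have h1 := integral_neg_eq_self (fun t : ℝ => erf (d * t) * Real.exp (-(α * t) ^ 2)) volume
    rw [show (fun t : ℝ => erf (d * -t) * Real.exp (-(α * -t) ^ 2))
        = fun t : ℝ => -(erf (d * t) * Real.exp (-(α * t) ^ 2)) from hodd, integral_neg] at h1
    linarith
  have := hconst c (d * β / α)
  rw [hL0, hR0] at this
  have : L c = R c := by linarith
  exact this

/-- Integral of erf against a Gaussian (Briggs' formula), together with the
particular case `d = 1`. -/
theorem erf_gaussian_integral (α d c β : ℝ) (hα : 0 < α) :
    ((∫ ξ : ℝ, erf (d * ξ + c) * Real.exp (-(α * ξ + β) ^ 2))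
        = (Real.sqrt π / α) * erf ((α * c - d * β) / Real.sqrt (α ^ 2 + d ^ 2))) ∧
    (∀ b : ℝ, (∫ ξ : ℝ, erf (ξ + b) * Real.exp (-(α * ξ + β) ^ 2))
        = (Real.sqrt π / α) * erf ((α * b - β) / Real.sqrt (1 + α ^ 2))) := by
  constructor
  · exact erf_gauss_main α d c β hα
  · intro b
    have h := erf_gauss_main α 1 b β hα
    simpa [add_comm] using h
end

section
/- Let ε > 0, σ > 0, τ > 0 and θ, θ_l ∈ ℝ, and set a = √(1 + 2εσ²τ). Then ∫_ℝ (ζ − θ_l) · exp(−ε(ζ − θ_l)² − (θ − ζ)²/(2σ²τ))/(σ√(2πτ)) dζ = ((θ − θ_l)/a³) · exp(−ε(θ − θ_l)²/a²). -/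
open Real MeasureTheory

lemma gauss_first_moment_zero (A : ℝ) : ∫ x : ℝ, x * Real.exp (-A * x^2) = 0 := by
  have h := MeasureTheory.integral_neg_eq_self (fun x : ℝ => x * Real.exp (-A * x^2)) (volume : Measure ℝ)
  simp only [neg_sq, neg_mul, integral_neg] at h
  simp only [neg_mul]
  linarith [h]

lemma gauss_shifted_first_moment (A p q C : ℝ) (hA : 0 < A) :
    ∫ x : ℝ, (x - p) * Real.exp (-A * (x - q)^2 + C)
      = Real.exp C * ((q - p) * Real.sqrt (π / A)) := by
  rw [← MeasureTheory.integral_add_right_eq_self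
      (fun x : ℝ => (x - p) * Real.exp (-A * (x - q)^2 + C)) q]
  have hint1 : Integrable (fun x : ℝ => x * Real.exp (-A * x^2)) :=
    integrable_mul_exp_neg_mul_sq hA
  have hint2 : Integrable (fun x : ℝ => Real.exp (-A * x^2)) :=
    integrable_exp_neg_mul_sq hA
  have heq : ∀ x : ℝ, (x + q - p) * Real.exp (-A * (x + q - q)^2 + C)
      = Real.exp C * (x * Real.exp (-A * x^2)) + ((q - p) * Real.exp C) * Real.exp (-A * x^2) := by
    intro x
    rw [Real.exp_add]
    ring_nf
  simp only [heq]
  rw [MeasureTheory.integral_add ((hint1.const_mul _)) ((hint2.const_mul _)),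
    integral_const_mul, integral_const_mul, gauss_first_moment_zero, integral_gaussian]
  ring

/-- First-moment convolution of a Gaussian RBF with the 1D heat kernel. -/
theorem gaussian_rbf_heat_first_moment
    (ε σ τ θ θ_l : ℝ) (hε : 0 < ε) (hσ : 0 < σ) (hτ : 0 < τ)
    (a : ℝ) (ha : a = Real.sqrt (1 + 2 * ε * σ ^ 2 * τ)) :
    (∫ ζ : ℝ,
        (ζ - θ_l) * (Real.exp (-ε * (ζ - θ_l) ^ 2 - (θ - ζ) ^ 2 / (2 * σ ^ 2 * τ)) /
          (σ * Real.sqrt (2 * π * τ))))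
      = ((θ - θ_l) / a ^ 3) * Real.exp (-ε * (θ - θ_l) ^ 2 / a ^ 2) := by
  have hs : 0 < σ ^ 2 * τ := by positivity
  have harg : 0 < 1 + 2 * ε * σ ^ 2 * τ := by positivity
  have hapos : 0 < a := by rw [ha]; exact Real.sqrt_pos.2 harg
  have ha2 : a ^ 2 = 1 + 2 * ε * σ ^ 2 * τ := by rw [ha, Real.sq_sqrt harg.le]
  set d := θ - θ_l with hd
  set A : ℝ := ε + 1 / (2 * σ ^ 2 * τ) with hA
  have hApos : 0 < A := by positivity
  set q : ℝ := θ_l + d / (1 + 2 * ε * σ ^ 2 * τ) with hq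
  set C : ℝ := -ε * d ^ 2 / (1 + 2 * ε * σ ^ 2 * τ) with hC
  have key : ∀ ζ : ℝ, -ε * (ζ - θ_l) ^ 2 - (θ - ζ) ^ 2 / (2 * σ ^ 2 * τ)
      = -A * (ζ - q) ^ 2 + C := by
    intro ζ
    rw [hA, hq, hC, hd]
    field_simp
    ring
  have step1 : (∫ ζ : ℝ,
        (ζ - θ_l) * (Real.exp (-ε * (ζ - θ_l) ^ 2 - (θ - ζ) ^ 2 / (2 * σ ^ 2 * τ)) /
          (σ * Real.sqrt (2 * π * τ))))
      = (∫ ζ : ℝ, (ζ - θ_l) * Real.exp (-A * (ζ - q) ^ 2 + C)) * (σ * Real.sqrt (2 * π * τ))⁻¹ := by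
    rw [← MeasureTheory.integral_mul_const]
    congr 1; ext ζ; rw [key ζ]; ring
  rw [step1, gauss_shifted_first_moment A θ_l q C hApos]
  have hsqA : Real.sqrt (π / A) = σ * Real.sqrt (2 * π * τ) / a := by
    have h1 : π / A = σ ^ 2 * (2 * π * τ) / a ^ 2 := by
      rw [ha2, hA]; field_simp; ring
    rw [h1, Real.sqrt_div (by positivity), Real.sqrt_mul (sq_nonneg σ),
      Real.sqrt_sq hσ.le, Real.sqrt_sq hapos.le]
  have hqp : q - θ_l = d / (1 + 2 * ε * σ ^ 2 * τ) := by rw [hq]; ring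
  have hexp : Real.exp C = Real.exp (-ε * d ^ 2 / a ^ 2) := by rw [hC, ha2]
  rw [hsqA, hqp, hexp]
  have hsqrt2 : 0 < Real.sqrt (2 * π * τ) := Real.sqrt_pos.2 (by positivity)
  have ha3 : a ^ 3 = a * (1 + 2 * ε * σ ^ 2 * τ) := by
    rw [← ha2]; ring
  rw [ha3]
  field_simp
end

section
/- Let ε > 0, σ_y > 0, τ > 0 and y, y_j ∈ ℝ, and set a = √(1 + 2εσ_y²τ) and λ = ((y − y_j) + y_j·a²)² + a²σ_y²τ. Then ∫_ℝ η² · exp(−ε(η − y_j)² − (y − η)²/(2σ_y²τ))/(σ_y√(2πτ)) dη = (λ/a⁵) · exp(−ε(y − y_j)²/a²). -/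
open Real MeasureTheory Filter Topology

private lemma tendsto_sq_mul_exp_top {p : ℝ} (hp : 0 < p) :
    Tendsto (fun x : ℝ => x ^ 2 * Real.exp (-p * x ^ 2)) atTop (𝓝 0) := by
  have h1 : Tendsto (fun x : ℝ => p * x ^ 2) atTop atTop :=
    (tendsto_pow_atTop two_ne_zero).const_mul_atTop hp
  have h2 := (Real.tendsto_pow_mul_exp_neg_atTop_nhds_zero 1).comp h1
  have heq : (fun x : ℝ => x ^ 2 * Real.exp (-p * x ^ 2))
      = fun x : ℝ => p⁻¹ * ((p * x ^ 2) ^ 1 * Real.exp (-(p * x ^ 2))) := by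
    funext x
    rw [neg_mul]
    field_simp
  rw [heq]
  simpa using h2.const_mul p⁻¹

private lemma tendsto_exp_sq_top {p : ℝ} (hp : 0 < p) :
    Tendsto (fun x : ℝ => Real.exp (-p * x ^ 2)) atTop (𝓝 0) := by
  have h1 : Tendsto (fun x : ℝ => p * x ^ 2) atTop atTop :=
    (tendsto_pow_atTop two_ne_zero).const_mul_atTop hp
  have h2 : Tendsto (fun x : ℝ => -(p * x ^ 2)) atTop atBot := tendsto_neg_atTop_atBot.comp h1
  have := Real.tendsto_exp_atBot.comp h2
  simpa [Function.comp_def, neg_mul] using this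

private lemma tendsto_exp_sq_bot {p : ℝ} (hp : 0 < p) :
    Tendsto (fun x : ℝ => Real.exp (-p * x ^ 2)) atBot (𝓝 0) := by
  have := (tendsto_exp_sq_top hp).comp tendsto_neg_atBot_atTop
  simpa [Function.comp_def, neg_sq] using this

private lemma tendsto_id_mul_exp_top {p : ℝ} (hp : 0 < p) :
    Tendsto (fun x : ℝ => x * Real.exp (-p * x ^ 2)) atTop (𝓝 0) := by
  apply squeeze_zero_norm' ?_ (tendsto_sq_mul_exp_top hp)
  filter_upwards [eventually_ge_atTop (1 : ℝ)] with x hx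
  rw [Real.norm_eq_abs, abs_mul, abs_of_nonneg (Real.exp_pos _).le,
    abs_of_nonneg (by linarith)]
  have h1 : x ≤ x ^ 2 := by nlinarith
  nlinarith [Real.exp_pos (-p * x ^ 2)]

private lemma tendsto_id_mul_exp_bot {p : ℝ} (hp : 0 < p) :
    Tendsto (fun x : ℝ => x * Real.exp (-p * x ^ 2)) atBot (𝓝 0) := by
  have h := ((tendsto_id_mul_exp_top hp).comp tendsto_neg_atBot_atTop).neg
  rw [neg_zero] at h
  have heq : (fun x : ℝ => x * Real.exp (-p * x ^ 2))
      = fun x : ℝ => -(((fun x : ℝ => x * Real.exp (-p * x ^ 2)) ∘ Neg.neg) x) := by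
    funext x
    simp [Function.comp, neg_sq]
  rw [heq]
  exact h

private lemma integrable_sq_mul_exp {p : ℝ} (hp : 0 < p) :
    Integrable (fun x : ℝ => x ^ 2 * Real.exp (-p * x ^ 2)) := by
  have := integrable_rpow_mul_exp_neg_mul_sq hp (s := 2) (by norm_num)
  simpa [Real.rpow_natCast] using this

private lemma integral_id_mul_gaussian {p : ℝ} (hp : 0 < p) :
    ∫ x : ℝ, x * Real.exp (-p * x ^ 2) = 0 := by
  have hp' : (2 * p) ≠ 0 := by positivity
  have hderiv : ∀ x : ℝ, HasDerivAt (fun x : ℝ => -(2 * p)⁻¹ * Real.exp (-p * x ^ 2))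
      (x * Real.exp (-p * x ^ 2)) x := by
    intro x
    have := (((hasDerivAt_pow 2 x).const_mul (-p)).exp).const_mul (-(2 * p)⁻¹)
    refine this.congr_deriv ?_
    field_simp
    ring
  have hbot : Tendsto (fun x : ℝ => -(2 * p)⁻¹ * Real.exp (-p * x ^ 2)) atBot (𝓝 0) := by
    simpa using ((tendsto_exp_sq_bot hp).const_mul (-(2 * p)⁻¹))
  have htop : Tendsto (fun x : ℝ => -(2 * p)⁻¹ * Real.exp (-p * x ^ 2)) atTop (𝓝 0) := by
    simpa using ((tendsto_exp_sq_top hp).const_mul (-(2 * p)⁻¹))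
  have := integral_of_hasDerivAt_of_tendsto hderiv (integrable_mul_exp_neg_mul_sq hp) hbot htop
  simpa using this

private lemma integral_sq_mul_gaussian {p : ℝ} (hp : 0 < p) :
    ∫ x : ℝ, x ^ 2 * Real.exp (-p * x ^ 2) = Real.sqrt (π / p) / (2 * p) := by
  have hp' : (2 * p) ≠ 0 := by positivity
  have hderiv : ∀ x : ℝ, HasDerivAt (fun x : ℝ => -(2 * p)⁻¹ * (x * Real.exp (-p * x ^ 2)))
      (x ^ 2 * Real.exp (-p * x ^ 2) - (2 * p)⁻¹ * Real.exp (-p * x ^ 2)) x := by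
    intro x
    have h1 : HasDerivAt (fun x : ℝ => x * Real.exp (-p * x ^ 2))
        (1 * Real.exp (-p * x ^ 2) + x * (Real.exp (-p * x ^ 2) * (-p * (2 * x ^ 1)))) x :=
      (hasDerivAt_id x).mul (((hasDerivAt_pow 2 x).const_mul (-p)).exp)
    have := h1.const_mul (-(2 * p)⁻¹)
    refine this.congr_deriv ?_
    field_simp
    ring
  have hint : Integrable (fun x : ℝ =>
      x ^ 2 * Real.exp (-p * x ^ 2) - (2 * p)⁻¹ * Real.exp (-p * x ^ 2)) :=
    (integrable_sq_mul_exp hp).sub ((integrable_exp_neg_mul_sq hp).const_mul _)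
  have hbot : Tendsto (fun x : ℝ => -(2 * p)⁻¹ * (x * Real.exp (-p * x ^ 2))) atBot (𝓝 0) := by
    simpa using ((tendsto_id_mul_exp_bot hp).const_mul (-(2 * p)⁻¹))
  have htop : Tendsto (fun x : ℝ => -(2 * p)⁻¹ * (x * Real.exp (-p * x ^ 2))) atTop (𝓝 0) := by
    simpa using ((tendsto_id_mul_exp_top hp).const_mul (-(2 * p)⁻¹))
  have key := integral_of_hasDerivAt_of_tendsto hderiv hint hbot htop
  rw [sub_zero] at key
  rw [integral_sub (integrable_sq_mul_exp hp) ((integrable_exp_neg_mul_sq hp).const_mul _),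
    integral_const_mul, integral_gaussian] at key
  have : ∫ x : ℝ, x ^ 2 * Real.exp (-p * x ^ 2) = (2 * p)⁻¹ * Real.sqrt (π / p) := by
    linarith
  rw [this, inv_mul_eq_div]

private lemma integral_sq_mul_gaussian_shift {p : ℝ} (hp : 0 < p) (c : ℝ) :
    ∫ x : ℝ, x ^ 2 * Real.exp (-p * (x - c) ^ 2)
      = Real.sqrt (π / p) * (c ^ 2 + (2 * p)⁻¹) := by
  rw [← integral_add_right_eq_self (fun x : ℝ => x ^ 2 * Real.exp (-p * (x - c) ^ 2)) c]
  have heq : ∀ x : ℝ, (x + c) ^ 2 * Real.exp (-p * (x + c - c) ^ 2)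
      = x ^ 2 * Real.exp (-p * x ^ 2) + (2 * c) * (x * Real.exp (-p * x ^ 2))
        + c ^ 2 * Real.exp (-p * x ^ 2) := by
    intro x
    rw [add_sub_cancel_right]
    ring
  simp_rw [heq]
  have e1 : ∫ x : ℝ, (x ^ 2 * Real.exp (-p * x ^ 2) + 2 * c * (x * Real.exp (-p * x ^ 2))
        + c ^ 2 * Real.exp (-p * x ^ 2))
      = (∫ x : ℝ, (x ^ 2 * Real.exp (-p * x ^ 2) + 2 * c * (x * Real.exp (-p * x ^ 2))))
        + ∫ x : ℝ, c ^ 2 * Real.exp (-p * x ^ 2) :=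
    integral_add ((integrable_sq_mul_exp hp).add
      ((integrable_mul_exp_neg_mul_sq hp).const_mul _))
      ((integrable_exp_neg_mul_sq hp).const_mul _)
  have e2 : ∫ x : ℝ, (x ^ 2 * Real.exp (-p * x ^ 2) + 2 * c * (x * Real.exp (-p * x ^ 2)))
      = (∫ x : ℝ, x ^ 2 * Real.exp (-p * x ^ 2)) + ∫ x : ℝ, 2 * c * (x * Real.exp (-p * x ^ 2)) :=
    integral_add (integrable_sq_mul_exp hp) ((integrable_mul_exp_neg_mul_sq hp).const_mul _)
  rw [e1, e2,
    integral_const_mul, integral_const_mul, integral_id_mul_gaussian hp,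
    integral_sq_mul_gaussian hp, integral_gaussian]
  ring

/-- Second-moment convolution of a Gaussian RBF with the 1D heat kernel. -/
theorem gaussian_rbf_heat_second_moment
    (ε σy τ y y_j : ℝ) (hε : 0 < ε) (hσy : 0 < σy) (hτ : 0 < τ)
    (a lam : ℝ) (ha : a = Real.sqrt (1 + 2 * ε * σy ^ 2 * τ))
    (hlam : lam = ((y - y_j) + y_j * a ^ 2) ^ 2 + a ^ 2 * σy ^ 2 * τ) :
    (∫ η : ℝ,
        η ^ 2 * (Real.exp (-ε * (η - y_j) ^ 2 - (y - η) ^ 2 / (2 * σy ^ 2 * τ)) /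
          (σy * Real.sqrt (2 * π * τ))))
      = (lam / a ^ 5) * Real.exp (-ε * (y - y_j) ^ 2 / a ^ 2) := by
  set A : ℝ := 1 + 2 * ε * σy ^ 2 * τ with hA
  have hApos : 0 < A := by positivity
  have ha2 : a ^ 2 = A := by rw [ha]; exact Real.sq_sqrt hApos.le
  have hapos : 0 < a := ha ▸ Real.sqrt_pos.mpr hApos
  set p : ℝ := A / (2 * σy ^ 2 * τ) with hp
  have hppos : 0 < p := by positivity
  set c : ℝ := (y - y_j + y_j * A) / A with hc
  -- pointwise rewriting of the integrand
  have hexp : ∀ η : ℝ,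
      Real.exp (-ε * (η - y_j) ^ 2 - (y - η) ^ 2 / (2 * σy ^ 2 * τ))
        = Real.exp (-ε * (y - y_j) ^ 2 / A) * Real.exp (-p * (η - c) ^ 2) := by
    intro η
    rw [← Real.exp_add]
    congr 1
    rw [hp, hc, hA]
    field_simp
    ring
  have hInt : (∫ η : ℝ,
      η ^ 2 * (Real.exp (-ε * (η - y_j) ^ 2 - (y - η) ^ 2 / (2 * σy ^ 2 * τ)) /
        (σy * Real.sqrt (2 * π * τ))))
      = (Real.exp (-ε * (y - y_j) ^ 2 / A) / (σy * Real.sqrt (2 * π * τ))) *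
        ∫ η : ℝ, η ^ 2 * Real.exp (-p * (η - c) ^ 2) := by
    rw [← integral_const_mul]
    congr 1
    funext η
    rw [hexp η]
    ring
  rw [hInt, integral_sq_mul_gaussian_shift hppos]
  -- evaluate the square root
  have hsqrtτ : 0 < Real.sqrt (2 * π * τ) := Real.sqrt_pos.mpr (by positivity)
  have hsq : Real.sqrt (π / p) = σy * Real.sqrt (2 * π * τ) / a := by
    have h1 : π / p = σy ^ 2 * (2 * π * τ) / A := by
      rw [hp]; field_simp
    rw [h1, Real.sqrt_div (by positivity), Real.sqrt_mul (by positivity),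
      Real.sqrt_sq hσy.le, ← ha]
  rw [hsq, ha2]
  rw [hlam, ha2]
  have hAne : A ≠ 0 := ne_of_gt hApos
  have hane : a ≠ 0 := ne_of_gt hapos
  have ha5 : a ^ 5 = a * A ^ 2 := by
    have : a ^ 5 = a * (a ^ 2) ^ 2 := by ring
    rw [this, ha2]
  rw [ha5]
  have hc2 : c ^ 2 + (2 * p)⁻¹ = ((y - y_j + y_j * A) ^ 2 + A * σy ^ 2 * τ) / A ^ 2 := by
    rw [hc, hp]
    field_simp
  rw [hc2]
  have hσne : σy * Real.sqrt (2 * π * τ) ≠ 0 := by positivity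
  field_simp
end

section
/- Let ε > 0, σ > 0, τ > 0, d ∈ ℝ and θ, θ_l ∈ ℝ, and set a = √(1 + 2εσ²τ). Then ∫_ℝ erf(dζ) · exp(−ε(ζ − θ_l)² − (θ − ζ)²/(2σ²τ))/(σ√(2πτ)) dζ = (1/a) · exp(−ε(θ − θ_l)²/a²) · erf( d(θ + 2εσ²τ·θ_l) / (a·√(a² + 2d²σ²τ)) ). -/
open Real MeasureTheory

lemma gauss_lin_eq (A B : ℝ) (hA : 0 < A) (x : ℝ) :
    Real.exp (-A*x^2 + B*x) = Real.exp (B^2/(4*A)) * Real.exp (-A*(x - B/(2*A))^2) := by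
  rw [← Real.exp_add]
  congr 1
  field_simp
  ring

lemma integrable_gauss_lin (A B : ℝ) (hA : 0 < A) :
    Integrable (fun x : ℝ => Real.exp (-A*x^2 + B*x)) := by
  simp only [gauss_lin_eq A B hA]
  exact ((integrable_exp_neg_mul_sq hA).comp_sub_right _).const_mul _

lemma integrable_mul_gauss_lin (A B : ℝ) (hA : 0 < A) :
    Integrable (fun x : ℝ => x * Real.exp (-A*x^2 + B*x)) := by
  simp only [gauss_lin_eq A B hA]
  have : (fun x : ℝ => x * (Real.exp (B^2/(4*A)) * Real.exp (-A*(x - B/(2*A))^2)))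
      = fun x : ℝ => Real.exp (B^2/(4*A)) *
        ((x - B/(2*A)) * Real.exp (-A*(x - B/(2*A))^2) + (B/(2*A)) * Real.exp (-A*(x - B/(2*A))^2)) := by
    funext x; ring
  rw [this]
  exact (((integrable_mul_exp_neg_mul_sq hA).comp_sub_right _).add
    (((integrable_exp_neg_mul_sq hA).comp_sub_right _).const_mul _)).const_mul _

lemma integral_mul_gauss_odd (A : ℝ) : ∫ x : ℝ, x * Real.exp (-A*x^2) = 0 := by
  have h := integral_neg_eq_self (fun x : ℝ => x * Real.exp (-A*x^2)) (volume : Measure ℝ)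
  simp only [neg_mul, neg_sq, neg_neg] at h
  rw [integral_neg] at h
  simp only [neg_mul]
  linarith

lemma integral_mul_gauss_lin (A B : ℝ) (hA : 0 < A) :
    ∫ x : ℝ, x * Real.exp (-A*x^2 + B*x)
      = B/(2*A) * Real.sqrt (π/A) * Real.exp (B^2/(4*A)) := by
  simp only [gauss_lin_eq A B hA]
  have h1 : (fun x : ℝ => x * (Real.exp (B^2/(4*A)) * Real.exp (-A*(x - B/(2*A))^2)))
      = fun x : ℝ => Real.exp (B^2/(4*A)) * (x * Real.exp (-A*(x - B/(2*A))^2)) := by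
    funext x; ring
  rw [h1, integral_const_mul]
  have h2 : ∫ x : ℝ, x * Real.exp (-A*(x - B/(2*A))^2)
      = ∫ x : ℝ, (x + B/(2*A)) * Real.exp (-A*x^2) := by
    rw [← integral_add_right_eq_self (fun x : ℝ => x * Real.exp (-A*(x - B/(2*A))^2)) (B/(2*A))]
    simp [add_sub_cancel_right]
  rw [h2]
  have h3 : (fun x : ℝ => (x + B/(2*A)) * Real.exp (-A*x^2))
      = fun x : ℝ => x * Real.exp (-A*x^2) + (B/(2*A)) * Real.exp (-A*x^2) := by
    funext x; ring
  rw [h3, integral_add (integrable_mul_exp_neg_mul_sq hA)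
    ((integrable_exp_neg_mul_sq hA).const_mul _), integral_mul_gauss_odd,
    integral_const_mul, integral_gaussian]
  ring

lemma inner_val (d p q : ℝ) (hp : 0 < p) (hd : d ≠ 0) (s : ℝ) :
    ∫ ζ : ℝ, ζ * Real.exp (-(d^2*s^2)*ζ^2 - p*(ζ-q)^2)
      = (Real.sqrt π/(d*Real.sqrt p)) *
        (Real.exp (-(d*q*Real.sqrt p * (s/Real.sqrt (d^2*s^2+p)))^2) *
          (d*q*Real.sqrt p * (p/((d^2*s^2+p)*Real.sqrt (d^2*s^2+p))))) := by
  have hA : 0 < d^2*s^2+p := by positivity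
  have hsA : 0 < Real.sqrt (d^2*s^2+p) := Real.sqrt_pos.mpr hA
  have hsp : 0 < Real.sqrt p := Real.sqrt_pos.mpr hp
  have h1 : (fun ζ : ℝ => ζ * Real.exp (-(d^2*s^2)*ζ^2 - p*(ζ-q)^2))
      = fun ζ : ℝ => Real.exp (-(p*q^2)) * (ζ * Real.exp (-(d^2*s^2+p)*ζ^2 + (2*p*q)*ζ)) := by
    funext ζ
    have h : (-(d^2*s^2)*ζ^2 - p*(ζ-q)^2)
        = (-(p*q^2)) + (-(d^2*s^2+p)*ζ^2 + (2*p*q)*ζ) := by ring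
    rw [h, Real.exp_add]
    ring
  rw [h1, integral_const_mul, integral_mul_gauss_lin _ _ hA]
  have hsq : (d*q*Real.sqrt p * (s/Real.sqrt (d^2*s^2+p)))^2 = d^2*q^2*p*s^2/(d^2*s^2+p) := by
    rw [mul_pow, mul_pow, div_pow, Real.sq_sqrt hp.le, Real.sq_sqrt hA.le]
    ring
  rw [hsq]
  have he : Real.exp (-(d^2*q^2*p*s^2/(d^2*s^2+p)))
      = Real.exp (-(p*q^2)) * Real.exp ((2*p*q)^2/(4*(d^2*s^2+p))) := by
    rw [← Real.exp_add]
    congr 1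
    field_simp
    ring
  rw [he]
  have hscal : 2*p*q/(2*(d^2*s^2+p)) * (Real.sqrt (π/(d^2*s^2+p)))
      = Real.sqrt π/(d*Real.sqrt p) *
        (d*q*Real.sqrt p * (p/((d^2*s^2+p)*Real.sqrt (d^2*s^2+p)))) := by
    rw [Real.sqrt_div pi_pos.le]
    field_simp
  linear_combination (Real.exp (-(p*q^2)) * Real.exp ((2*p*q)^2/(4*(d^2*s^2+p)))) * hscal

lemma interval_exp_sq (x : ℝ) :
    ∫ t in (0:ℝ)..x, Real.exp (-t^2) = (Real.sqrt π / 2) * erf x := by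
  have h : Real.sqrt π ≠ 0 := by positivity
  rw [erf]; field_simp

lemma sqrt_eq_of_sq {x y : ℝ} (hy : 0 ≤ y) (h : x = y^2) : Real.sqrt x = y := by
  rw [h, Real.sqrt_sq hy]

lemma hasDeriv_phi (d p q : ℝ) (hp : 0 < p) (s : ℝ) :
    HasDerivAt (fun s : ℝ => d*q*Real.sqrt p * (s / Real.sqrt (d^2*s^2+p)))
      (d*q*Real.sqrt p * (p/((d^2*s^2+p)*Real.sqrt (d^2*s^2+p)))) s := by
  have hA : 0 < d^2*s^2+p := by positivity
  have hsA : 0 < Real.sqrt (d^2*s^2+p) := Real.sqrt_pos.mpr hA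
  have hu : HasDerivAt (fun s : ℝ => d^2*s^2+p) (d^2*(2*s)) s := by
    have := ((hasDerivAt_pow 2 s).const_mul (d^2)).add_const p
    simpa using this
  have hsq : HasDerivAt (fun s : ℝ => Real.sqrt (d^2*s^2+p))
      (d^2*(2*s)/(2*Real.sqrt (d^2*s^2+p))) s := hu.sqrt hA.ne'
  have hdiv := (hasDerivAt_id s).div hsq hsA.ne'
  refine (hdiv.const_mul (d*q*Real.sqrt p)).congr_deriv ?_
  have hAA : Real.sqrt (d^2*s^2+p) * Real.sqrt (d^2*s^2+p) = d^2*s^2+p :=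
    Real.mul_self_sqrt hA.le
  simp only [id]
  field_simp
  linear_combination (d^3*q*s^2)*hAA

lemma erf_gauss (d p q : ℝ) (hp : 0 < p) :
    ∫ ζ : ℝ, erf (d * ζ) * Real.exp (-p * (ζ - q) ^ 2)
      = Real.sqrt (π / p) * erf (d * q * Real.sqrt p / Real.sqrt (d ^ 2 + p)) := by
  rcases eq_or_ne d 0 with hd | hd
  · simp [hd, erf_zero]
  have hπ : 0 < Real.sqrt π := Real.sqrt_pos.mpr pi_pos
  have hsp : 0 < Real.sqrt p := Real.sqrt_pos.mpr hp
  set c : ℝ := 2/Real.sqrt π * d with hc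
  -- Step 1: pointwise
  have step1 : ∀ ζ : ℝ, erf (d * ζ) * Real.exp (-p * (ζ - q) ^ 2)
      = ∫ s in Set.Ioc (0:ℝ) 1, c * (ζ * Real.exp (-(d^2*s^2)*ζ^2 - p*(ζ-q)^2)) := by
    intro ζ
    have h0 : (d*ζ) • ∫ s in (0:ℝ)..1, Real.exp (-((d*ζ)*s)^2)
        = ∫ t in ((d*ζ)*0)..((d*ζ)*1), Real.exp (-t^2) :=
      intervalIntegral.smul_integral_comp_mul_left (fun t => Real.exp (-t^2)) (d*ζ)
    rw [mul_zero, mul_one, smul_eq_mul] at h0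
    have h1 : erf (d * ζ)
        = 2/Real.sqrt π * ((d*ζ) * ∫ s in (0:ℝ)..1, Real.exp (-((d*ζ)*s)^2)) := by
      rw [erf, h0]
    have h2 : ∀ s : ℝ, c * (ζ * Real.exp (-(d^2*s^2)*ζ^2 - p*(ζ-q)^2))
        = (c * ζ * Real.exp (-p*(ζ-q)^2)) * Real.exp (-((d*ζ)*s)^2) := by
      intro s
      have h : (-(d^2*s^2)*ζ^2 - p*(ζ-q)^2) = (-((d*ζ)*s)^2) + (-p*(ζ-q)^2) := by ring
      rw [h, Real.exp_add]
      ring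
    simp only [h2]
    rw [integral_const_mul, h1, ← intervalIntegral.integral_of_le zero_le_one, hc]
    ring
  -- integrability for Fubini
  have hbint : Integrable (fun ζ : ℝ => ζ * Real.exp (-p*(ζ-q)^2)) := by
    have h : (fun ζ : ℝ => ζ * Real.exp (-p*(ζ-q)^2))
        = fun ζ : ℝ => Real.exp (-(p*q^2)) * (ζ * Real.exp (-p*ζ^2 + (2*p*q)*ζ)) := by
      funext ζ
      have h' : (-p*(ζ-q)^2) = (-(p*q^2)) + (-p*ζ^2 + (2*p*q)*ζ) := by ring
      rw [h', Real.exp_add]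
      ring
    rw [h]
    exact (integrable_mul_gauss_lin p (2*p*q) hp).const_mul _
  have hcont : Continuous (fun z : ℝ × ℝ =>
      c * (z.1 * Real.exp (-(d^2*z.2^2)*z.1^2 - p*(z.1-q)^2))) := by
    fun_prop
  have hInt : Integrable (Function.uncurry fun ζ s : ℝ =>
      c * (ζ * Real.exp (-(d^2*s^2)*ζ^2 - p*(ζ-q)^2)))
      ((volume : Measure ℝ).prod (volume.restrict (Set.Ioc 0 1))) := by
    refine Integrable.mono'
      (((hbint.norm.const_mul |c|).mul_prod (integrable_const (1:ℝ))))
      hcont.aestronglyMeasurable ?_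
    filter_upwards with z
    simp only [Function.uncurry, norm_mul, mul_one, Real.norm_eq_abs, abs_mul, abs_exp]
    have h1 : Real.exp (-(d^2*z.2^2)*z.1^2 - p*(z.1-q)^2) ≤ Real.exp (-p*(z.1-q)^2) := by
      apply Real.exp_le_exp.mpr
      nlinarith [sq_nonneg (d*z.2*z.1), sq_nonneg z.1, sq_nonneg z.2, sq_nonneg d]
    exact mul_le_mul_of_nonneg_left (mul_le_mul_of_nonneg_left h1 (abs_nonneg _)) (abs_nonneg _)
  -- rewrite and swap
  calc (∫ ζ : ℝ, erf (d * ζ) * Real.exp (-p * (ζ - q) ^ 2))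
      = ∫ ζ : ℝ, ∫ s in Set.Ioc (0:ℝ) 1,
          c * (ζ * Real.exp (-(d^2*s^2)*ζ^2 - p*(ζ-q)^2)) := by
        exact integral_congr_ae (Filter.Eventually.of_forall step1)
    _ = ∫ s in Set.Ioc (0:ℝ) 1, ∫ ζ : ℝ,
          c * (ζ * Real.exp (-(d^2*s^2)*ζ^2 - p*(ζ-q)^2)) := integral_integral_swap hInt
    _ = ∫ s in Set.Ioc (0:ℝ) 1, c * ((Real.sqrt π/(d*Real.sqrt p)) *
          (Real.exp (-(d*q*Real.sqrt p * (s/Real.sqrt (d^2*s^2+p)))^2) *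
            (d*q*Real.sqrt p * (p/((d^2*s^2+p)*Real.sqrt (d^2*s^2+p)))))) := by
        refine integral_congr_ae (Filter.Eventually.of_forall fun s => ?_)
        dsimp only
        rw [integral_const_mul, inner_val d p q hp hd s]
    _ = (c * (Real.sqrt π/(d*Real.sqrt p))) * ∫ s in Set.Ioc (0:ℝ) 1,
          Real.exp (-(d*q*Real.sqrt p * (s/Real.sqrt (d^2*s^2+p)))^2) *
            (d*q*Real.sqrt p * (p/((d^2*s^2+p)*Real.sqrt (d^2*s^2+p)))) := by
        rw [← integral_const_mul]
        simp only [mul_assoc]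
    _ = Real.sqrt (π / p) * erf (d * q * Real.sqrt p / Real.sqrt (d ^ 2 + p)) := by
        have hAcont : Continuous fun x : ℝ => d*q*Real.sqrt p * (p/((d^2*x^2+p)*Real.sqrt (d^2*x^2+p))) := by
          have h1 : Continuous fun x : ℝ => (d^2*x^2+p)*Real.sqrt (d^2*x^2+p) := by fun_prop
          exact continuous_const.mul (continuous_const.div h1 (fun x => by positivity))
        have hg : Continuous fun u : ℝ => Real.exp (-u^2) := by fun_prop
        have hsub := intervalIntegral.integral_comp_mul_deriv
          (f := fun s : ℝ => d*q*Real.sqrt p * (s / Real.sqrt (d^2*s^2+p)))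
          (f' := fun s : ℝ => d*q*Real.sqrt p * (p/((d^2*s^2+p)*Real.sqrt (d^2*s^2+p))))
          (g := fun u : ℝ => Real.exp (-u^2)) (a := 0) (b := 1)
          (fun x _ => hasDeriv_phi d p q hp x) hAcont.continuousOn hg
        simp only [Function.comp] at hsub
        rw [← intervalIntegral.integral_of_le zero_le_one, hsub]
        have h0' : d * q * Real.sqrt p * ((0:ℝ) / Real.sqrt (d^2*0^2+p)) = 0 := by simp
        have h1' : d * q * Real.sqrt p * ((1:ℝ) / Real.sqrt (d^2*1^2+p))
            = d * q * Real.sqrt p / Real.sqrt (d ^ 2 + p) := by norm_num [div_eq_mul_inv]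
        rw [h0', h1', interval_exp_sq]
        have hsqrt : Real.sqrt (π / p) = Real.sqrt π / Real.sqrt p :=
          Real.sqrt_div pi_pos.le p
        rw [hsqrt, hc]
        field_simp

lemma sqrt_eq_of_sq' {x y : ℝ} (hy : 0 ≤ y) (h : x = y^2) : Real.sqrt x = y := by
  rw [h, Real.sqrt_sq hy]

/-- Convolution of erf with the product of a Gaussian RBF and the 1D heat kernel. -/
theorem erf_gaussian_rbf_heat_convolution
    (ε σ τ d θ θ_l : ℝ) (hε : 0 < ε) (hσ : 0 < σ) (hτ : 0 < τ)
    (a : ℝ) (ha : a = Real.sqrt (1 + 2 * ε * σ ^ 2 * τ)) :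
    (∫ ζ : ℝ,
        erf (d * ζ) * (Real.exp (-ε * (ζ - θ_l) ^ 2 - (θ - ζ) ^ 2 / (2 * σ ^ 2 * τ)) /
          (σ * Real.sqrt (2 * π * τ))))
      = (1 / a) * Real.exp (-ε * (θ - θ_l) ^ 2 / a ^ 2) *
          erf (d * (θ + 2 * ε * σ ^ 2 * τ * θ_l) /
            (a * Real.sqrt (a ^ 2 + 2 * d ^ 2 * σ ^ 2 * τ))) := by
  subst ha
  have hb : (0:ℝ) < 1 + 2 * ε * σ ^ 2 * τ := by positivity
  simp only [Real.sq_sqrt hb.le]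
  set B : ℝ := 1 + 2 * ε * σ ^ 2 * τ with hBdef
  have hsB : 0 < Real.sqrt B := Real.sqrt_pos.mpr hb
  have hBB : Real.sqrt B * Real.sqrt B = B := Real.mul_self_sqrt hb.le
  set p : ℝ := ε + 1/(2*σ^2*τ) with hpdef
  set q : ℝ := (θ + 2*ε*σ^2*τ*θ_l)/B with hqdef
  have hp : 0 < p := by rw [hpdef]; positivity
  have hK : (0:ℝ) < σ * Real.sqrt (2*π*τ) := by
    have : (0:ℝ) < Real.sqrt (2*π*τ) := Real.sqrt_pos.mpr (by positivity)
    positivity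
  -- completing the square
  have key : ∀ ζ : ℝ, Real.exp (-ε * (ζ - θ_l) ^ 2 - (θ - ζ) ^ 2 / (2 * σ ^ 2 * τ))
      = Real.exp (-ε*(θ-θ_l)^2/B) * Real.exp (-p*(ζ-q)^2) := by
    intro ζ
    rw [← Real.exp_add]
    congr 1
    rw [hpdef, hqdef, hBdef]
    field_simp
    ring
  have step1 : (∫ ζ : ℝ,
        erf (d * ζ) * (Real.exp (-ε * (ζ - θ_l) ^ 2 - (θ - ζ) ^ 2 / (2 * σ ^ 2 * τ)) /
          (σ * Real.sqrt (2 * π * τ))))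
      = (Real.exp (-ε*(θ-θ_l)^2/B) / (σ * Real.sqrt (2*π*τ))) *
          ∫ ζ : ℝ, erf (d * ζ) * Real.exp (-p*(ζ-q)^2) := by
    rw [← integral_const_mul]
    refine integral_congr_ae (Filter.Eventually.of_forall fun ζ => ?_)
    dsimp only
    rw [key ζ]
    ring
  rw [step1, erf_gauss d p q hp]
  -- the coefficient
  have hcoef : Real.sqrt (π/p) = σ * Real.sqrt (2*π*τ) / Real.sqrt B := by
    apply sqrt_eq_of_sq' (by positivity)
    rw [div_pow, mul_pow, Real.sq_sqrt (by positivity : (0:ℝ) ≤ 2*π*τ), Real.sq_sqrt hb.le]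
    rw [hpdef, hBdef]
    field_simp
    ring
  -- the erf argument
  have hS : 0 < Real.sqrt (B + 2*d^2*σ^2*τ) := Real.sqrt_pos.mpr (by positivity)
  have hSS : Real.sqrt (B + 2*d^2*σ^2*τ) * Real.sqrt (B + 2*d^2*σ^2*τ) = B + 2*d^2*σ^2*τ :=
    Real.mul_self_sqrt (by positivity)
  have hratio : Real.sqrt p / Real.sqrt (d^2+p) = Real.sqrt B / Real.sqrt (B + 2*d^2*σ^2*τ) := by
    rw [← Real.sqrt_div hp.le]
    apply sqrt_eq_of_sq' (by positivity)
    rw [div_pow, sq (Real.sqrt B), sq (Real.sqrt (B + 2*d^2*σ^2*τ)), hBB, hSS]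
    rw [hpdef, hBdef]
    field_simp
    ring
  have harg : d * q * Real.sqrt p / Real.sqrt (d ^ 2 + p)
      = d * (θ + 2 * ε * σ ^ 2 * τ * θ_l) / (Real.sqrt B * Real.sqrt (B + 2 * d ^ 2 * σ ^ 2 * τ)) := by
    rw [mul_div_assoc, hratio, hqdef]
    field_simp
    linear_combination (d * (θ + 2*ε*σ^2*τ*θ_l)) * hBB
  rw [harg, hcoef]
  have h2 : (2:ℝ) * d ^ 2 * σ ^ 2 * τ = 2*d^2*σ^2*τ := by ring
  field_simp
end
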